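/- Let Ω₁ ⊂ ℍ_s^n be slice-open and real-path-connected, let Ω₂ ⊂ ℍ_s^n be slice-open and Ω₁-stem-preserving, and let f : Ω₂ → ℍ be weakly slice regular. Then the Ω₁-slice conjugation f^c_{Ω₁} : Ω₁ → ℍ is weakly slice regular. -/

import Mathlib

open scoped Quaternion
open Classical

attribute [local instance] Classical.propDecidable

noncomputable section

/-- Continuous-path carrier type: maps from `[0,1]` to `ℂⁿ`. -/
abbrev PathC (n : ℕ) := unitInterval → (Fin n → ℂ)

/-- The sphere of quaternionic imaginary units `𝕊 = {I : I² = -1}`. -/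
def SQ : Set ℍ[ℝ] := {I | I ^ 2 = -1}

/-- A quaternion is real if it is the image of a real number. -/
def IsRealQ (p : ℍ[ℝ]) : Prop := ∃ r : ℝ, p = (r : ℍ[ℝ])

/-- `Ψ_i^I : ℂⁿ → ℂ_Iⁿ`, componentwise `x + y i ↦ x + y I`. -/
def psi {n : ℕ} (I : ℍ[ℝ]) (z : Fin n → ℂ) : Fin n → ℍ[ℝ] :=
  fun k => ((z k).re : ℍ[ℝ]) + (z k).im • I

/-- The slice `ℂ_I = {x + y I}` as a subset of the quaternions. -/
def CI (I : ℍ[ℝ]) : Set ℍ[ℝ] := {p | ∃ x y : ℝ, p = (x : ℍ[ℝ]) + y • I}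

/-- The weakly slice cone `ℍ_sⁿ = ⋃_{I ∈ 𝕊} ℂ_Iⁿ`. -/
def HSliceCone (n : ℕ) : Set (Fin n → ℍ[ℝ]) := ⋃ I ∈ SQ, Set.range (psi (n := n) I)

/-- Membership in `𝒫(ℂⁿ)`: continuous with real initial point. -/
def IsPathP {n : ℕ} (γ : PathC n) : Prop :=
  Continuous γ ∧ ∀ k, ((γ 0) k).im = 0

/-- `γ^I ⊂ Ω`. -/
def pathInSlice {n : ℕ} (Ω : Set (Fin n → ℍ[ℝ])) (I : ℍ[ℝ]) (γ : PathC n) : Prop :=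
  ∀ t, psi I (γ t) ∈ Ω

/-- `𝕊(Ω, γ) = {I ∈ 𝕊 : γ^I ⊂ Ω}`. -/
def SGamma {n : ℕ} (Ω : Set (Fin n → ℍ[ℝ])) (γ : PathC n) : Set ℍ[ℝ] :=
  {I | I ∈ SQ ∧ pathInSlice Ω I γ}

/-- `γ ∈ 𝒫(ℂⁿ, Ω)`. -/
def PathIn {n : ℕ} (Ω : Set (Fin n → ℍ[ℝ])) (γ : PathC n) : Prop :=
  IsPathP γ ∧ ∃ I, I ∈ SGamma Ω γ

/-- `F` is a path-slice stem function of `f` on `Ω`. -/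
def IsStem {n : ℕ} (Ω : Set (Fin n → ℍ[ℝ])) (f : (Fin n → ℍ[ℝ]) → ℍ[ℝ])
    (F : PathC n → ℍ[ℝ] × ℍ[ℝ]) : Prop :=
  ∀ γ, PathIn Ω γ → ∀ I ∈ SGamma Ω γ, f (psi I (γ 1)) = (F γ).1 + I * (F γ).2

/-- `f` is a path-slice function on `Ω`. -/
def PathSlice {n : ℕ} (Ω : Set (Fin n → ℍ[ℝ])) (f : (Fin n → ℍ[ℝ]) → ℍ[ℝ]) : Prop :=
  ∃ F, IsStem Ω f F

/-- `Ω` is real-path-connected. -/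
def RealPathConnected {n : ℕ} (Ω : Set (Fin n → ℍ[ℝ])) : Prop :=
  ∀ q ∈ Ω, ∃ γ : PathC n, PathIn Ω γ ∧ ∃ I ∈ SGamma Ω γ, psi I (γ 1) = q

/-- `Ω₂` is `Ω₁`-stem-preserving. -/
def StemPreserving {n : ℕ} (Ω₁ Ω₂ : Set (Fin n → ℍ[ℝ])) : Prop :=
  (∀ γ : PathC n, PathIn Ω₁ γ → (SGamma Ω₂ γ).Nontrivial) ∧
  (∀ α β : PathC n, PathIn Ω₁ α → PathIn Ω₁ β → α 1 = β 1 →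
    ¬ ∃ I, SGamma Ω₂ α ∩ SGamma Ω₂ β = {I})

/-- `Ω` is self-stem-preserving. -/
def SelfStemPreserving {n : ℕ} (Ω : Set (Fin n → ℍ[ℝ])) : Prop :=
  RealPathConnected Ω ∧ StemPreserving Ω Ω

/-- The map `𝕴 : ℍ_sⁿ → 𝕊 ∪ {0}`. -/
def frakI {n : ℕ} (q : Fin n → ℍ[ℝ]) : ℍ[ℝ] :=
  if h : ∀ k, IsRealQ (q k) then 0
  else
    let k := (Finset.univ.filter fun k => ¬ IsRealQ (q k)).min' (by
      push_neg at h
      obtain ⟨k, hk⟩ := h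
      exact ⟨k, Finset.mem_filter.mpr ⟨Finset.mem_univ k, hk⟩⟩)
    ‖q k - ((q k).re : ℍ[ℝ])‖⁻¹ • (q k - ((q k).re : ℍ[ℝ]))

/-- A choice of path-slice stem function of `f` (on paths in `Ω`); by
the results of Dou–Jin–Ren–Yang its restriction to `𝒫(ℂⁿ, Ω₁)` is the canonical `F^f_{Ω₁}`. -/
def stemOf {n : ℕ} (Ω : Set (Fin n → ℍ[ℝ])) (f : (Fin n → ℍ[ℝ]) → ℍ[ℝ]) :
    PathC n → ℍ[ℝ] × ℍ[ℝ] :=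
  Classical.epsilon (IsStem Ω f)

/-- The function `ℱ^f_{Ω₁} : Ω₁ → ℍ²` induced by the stem of `f` (path-slice on `Ω₂`). -/
def scrF {n : ℕ} (Ω₁ Ω₂ : Set (Fin n → ℍ[ℝ])) (f : (Fin n → ℍ[ℝ]) → ℍ[ℝ])
    (q : Fin n → ℍ[ℝ]) : ℍ[ℝ] × ℍ[ℝ] :=
  if ∀ k, IsRealQ (q k) then (f q, 0)
  else stemOf Ω₂ f (Classical.epsilon (fun γ : PathC n =>
    PathIn Ω₁ γ ∧ pathInSlice Ω₁ (frakI q) γ ∧ psi (frakI q) (γ 1) = q))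

/-- The `Ω₁`-slice conjugation `f^c_{Ω₁}`. -/
def sliceConj {n : ℕ} (Ω₁ Ω₂ : Set (Fin n → ℍ[ℝ])) (f : (Fin n → ℍ[ℝ]) → ℍ[ℝ]) :
    (Fin n → ℍ[ℝ]) → ℍ[ℝ] :=
  fun q => star (scrF Ω₁ Ω₂ f q).1 + frakI q * star (scrF Ω₁ Ω₂ f q).2

/-- The `*`-product `g * f` of a path-slice `g : Ω₁ → ℍ` with `f : Ω₂ → ℍ`. -/
def starProdF {n : ℕ} (Ω₁ Ω₂ : Set (Fin n → ℍ[ℝ])) (g f : (Fin n → ℍ[ℝ]) → ℍ[ℝ]) :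
    (Fin n → ℍ[ℝ]) → ℍ[ℝ] :=
  fun q => g q * (scrF Ω₁ Ω₂ f q).1 + frakI q * g q * (scrF Ω₁ Ω₂ f q).2

/-- The symmetrization `f^s_{Ω₁} = f^c_{Ω₁} * f`. -/
def symmF {n : ℕ} (Ω₁ Ω₂ : Set (Fin n → ℍ[ℝ])) (f : (Fin n → ℍ[ℝ]) → ℍ[ℝ]) :
    (Fin n → ℍ[ℝ]) → ℍ[ℝ] :=
  starProdF Ω₁ Ω₂ (sliceConj Ω₁ Ω₂ f) f

/-- The pointwise `*`-product on `ℍ²`. -/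
def starPair (p q : ℍ[ℝ] × ℍ[ℝ]) : ℍ[ℝ] × ℍ[ℝ] :=
  (p.1 * q.1 - p.2 * q.2, p.2 * q.1 + p.1 * q.2)

/-- Slice-open sets: every slice is open (pulled back to `ℂⁿ` via `Ψ_i^I`). -/
def SliceOpen {n : ℕ} (U : Set (Fin n → ℍ[ℝ])) : Prop :=
  ∀ I ∈ SQ, IsOpen {z : Fin n → ℂ | psi I z ∈ U}

/-- Weakly slice regular functions: each slice restriction is left `I`-holomorphic. -/
def SliceRegular {n : ℕ} (Ω : Set (Fin n → ℍ[ℝ])) (f : (Fin n → ℍ[ℝ]) → ℍ[ℝ]) : Prop :=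
  ∀ I ∈ SQ, ∀ z : Fin n → ℂ, psi I z ∈ Ω →
    DifferentiableWithinAt ℝ (fun w => f (psi I w)) {w | psi I w ∈ Ω} z ∧
    ∀ ℓ : Fin n,
      fderivWithin ℝ (fun w => f (psi I w)) {w | psi I w ∈ Ω} z (Pi.single ℓ 1)
        + I * fderivWithin ℝ (fun w => f (psi I w)) {w | psi I w ∈ Ω} z (Pi.single ℓ Complex.I)
        = 0

/-- The ball `B_I(q, r)` inside the slice `ℂ_Iⁿ`. -/
def BI {n : ℕ} (I : ℍ[ℝ]) (q : Fin n → ℍ[ℝ]) (r : ℝ) : Set (Fin n → ℍ[ℝ]) :=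
  {p | p ∈ Set.range (psi (n := n) I) ∧ dist p q < r}

/-- The slice topology. -/
def sliceTop (n : ℕ) : TopologicalSpace (Fin n → ℍ[ℝ]) where
  IsOpen := SliceOpen
  isOpen_univ := by intro I _; simpa using isOpen_univ
  isOpen_inter := by
    intro s t hs ht I hI
    have h : {z : Fin n → ℂ | psi I z ∈ s ∩ t}
        = {z : Fin n → ℂ | psi I z ∈ s} ∩ {z : Fin n → ℂ | psi I z ∈ t} := by
      ext z; simp [Set.mem_inter_iff]
    rw [h]
    exact (hs I hI).inter (ht I hI)
  isOpen_sUnion := by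
    intro S hS I hI
    have h : {z : Fin n → ℂ | psi I z ∈ ⋃₀ S} = ⋃ s ∈ S, {z : Fin n → ℂ | psi I z ∈ s} := by
      ext z; simp
    rw [h]
    exact isOpen_biUnion fun s hs => hS s hs I hI

/-- Slice-domains: nonempty slice-open sets connected in the slice topology. -/
def SliceDomain {n : ℕ} (Ω : Set (Fin n → ℍ[ℝ])) : Prop :=
  SliceOpen Ω ∧ @IsConnected _ (sliceTop n) Ω

/-- Concatenation `γ · ℒ_{γ(1)}^z` of a path with the segment from `γ(1)` to `z`. -/
def concatSeg {n : ℕ} (γ : PathC n) (z : Fin n → ℂ) : PathC n := fun t =>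
  if h : (t : ℝ) ≤ 1 / 2 then
    γ ⟨2 * (t : ℝ), ⟨by linarith [t.2.1], by linarith⟩⟩
  else
    (1 - (2 * (t : ℝ) - 1)) • γ 1 + (2 * (t : ℝ) - 1) • z

/-- The action of `σ` on `ℍ²`: `σ(p₁, p₂) = (-p₂, p₁)`. -/
def sigmaAct (p : ℍ[ℝ] × ℍ[ℝ]) : ℍ[ℝ] × ℍ[ℝ] := (-p.2, p.1)

/-- `F : 𝒫(ℂⁿ, Ω) → ℍ²` is holomorphic at the path `γ`. -/
def StemHoloAt {n : ℕ} (Ω : Set (Fin n → ℍ[ℝ])) (F : PathC n → ℍ[ℝ] × ℍ[ℝ])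
    (γ : PathC n) : Prop :=
  ∃ r > 0, (∀ z ∈ Metric.ball (γ 1) r, PathIn Ω (concatSeg γ z)) ∧
    ∀ z ∈ Metric.ball (γ 1) r,
      DifferentiableAt ℝ (fun w => F (concatSeg γ w)) z ∧
      ∀ ℓ : Fin n,
        fderiv ℝ (fun w => F (concatSeg γ w)) z (Pi.single ℓ 1)
          + sigmaAct (fderiv ℝ (fun w => F (concatSeg γ w)) z (Pi.single ℓ Complex.I)) = 0

/-- `F` is holomorphic (at every path of `𝒫(ℂⁿ, Ω)`). -/
def StemHolo {n : ℕ} (Ω : Set (Fin n → ℍ[ℝ])) (F : PathC n → ℍ[ℝ] × ℍ[ℝ]) : Prop :=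
  ∀ γ, PathIn Ω γ → StemHoloAt Ω F γ

/-- `E` is a complex-analytic subset of the open set `U ⊂ ℂⁿ`. -/
def IsComplexAnalyticSubset {n : ℕ} (U E : Set (Fin n → ℂ)) : Prop :=
  E ⊆ U ∧ ∀ z ∈ U, ∃ V, V ⊆ U ∧ IsOpen V ∧ z ∈ V ∧
    ∃ (m : ℕ) (h : Fin m → (Fin n → ℂ) → ℂ),
      (∀ j, DifferentiableOn ℂ (h j) V) ∧ E ∩ V = {w | w ∈ V ∧ ∀ j, h j w = 0}

/-- `A` is a path-slice analytic subset of the slice-domain `Ω`. -/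
def PathSliceAnalytic {n : ℕ} (Ω A : Set (Fin n → ℍ[ℝ])) : Prop :=
  A = Ω ∨ ∀ γ : PathC n, PathIn Ω γ →
    ∃ r > 0, ∃ rI : ℍ[ℝ] → ℝ, (∀ I ∈ SGamma Ω γ, rI I ∈ Set.Ioc (0 : ℝ) r) ∧
      ∃ E : Set (Fin n → ℂ), IsComplexAnalyticSubset (Metric.ball (γ 1) r) E ∧
        E ≠ Metric.ball (γ 1) r ∧
        ∀ I ∈ SGamma Ω γ, A ∩ BI I (psi I (γ 1)) (rI I) ⊆ psi I '' E



open Topology Filter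

set_option maxHeartbeats 2000000
set_option synthInstance.maxHeartbeats 1000000

namespace SliceAux


lemma mul_self_of_mem {I : ℍ[ℝ]} (h : I ∈ SQ) : I * I = -1 := by
  have := h; rwa [SQ, Set.mem_setOf_eq, pow_two] at this

lemma neg_mem_SQ {I : ℍ[ℝ]} (h : I ∈ SQ) : -I ∈ SQ := by
  have h' : I * I = -1 := mul_self_of_mem h
  show (-I) ^ 2 = -1
  rw [pow_two, neg_mul_neg, h']

lemma re_and_norm {I : ℍ[ℝ]} (h : I ∈ SQ) :
    I.re = 0 ∧ I.imI ^ 2 + I.imJ ^ 2 + I.imK ^ 2 = 1 := by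
  have h' : I * I = -1 := mul_self_of_mem h
  rw [Quaternion.ext_iff] at h'
  simp only [Quaternion.re_mul, Quaternion.imI_mul, Quaternion.imJ_mul, Quaternion.imK_mul,
    Quaternion.re_neg, Quaternion.imI_neg, Quaternion.imJ_neg, Quaternion.imK_neg,
    Quaternion.re_one, Quaternion.imI_one, Quaternion.imJ_one, Quaternion.imK_one] at h'
  obtain ⟨h1, h2, h3, h4⟩ := h'
  by_cases hr : I.re = 0
  · refine ⟨hr, by nlinarith [h1]⟩
  · exfalso
    have h2' : I.re * I.imI = 0 := by nlinarith [h2]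
    have h3' : I.re * I.imJ = 0 := by nlinarith [h3]
    have h4' : I.re * I.imK = 0 := by nlinarith [h4]
    have hx : I.imI = 0 := by rcases mul_eq_zero.1 h2' with h5 | h5; exact absurd h5 hr; exact h5
    have hy : I.imJ = 0 := by rcases mul_eq_zero.1 h3' with h5 | h5; exact absurd h5 hr; exact h5
    have hz : I.imK = 0 := by rcases mul_eq_zero.1 h4' with h5 | h5; exact absurd h5 hr; exact h5
    rw [hx, hy, hz] at h1
    nlinarith [h1, mul_self_nonneg I.re]

lemma re_of_mem {I : ℍ[ℝ]} (h : I ∈ SQ) : I.re = 0 := (re_and_norm h).1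

lemma norm_of_mem {I : ℍ[ℝ]} (h : I ∈ SQ) : ‖I‖ = 1 := by
  obtain ⟨h1, h2⟩ := re_and_norm h
  have hn : Quaternion.normSq I = 1 := by
    rw [Quaternion.normSq_def']; nlinarith
  have h3 : ‖I‖ * ‖I‖ = 1 := by rw [← Quaternion.normSq_eq_norm_mul_self, hn]
  nlinarith [norm_nonneg I]

lemma ne_zero_of_mem {I : ℍ[ℝ]} (h : I ∈ SQ) : I ≠ 0 := by
  intro h0; have := norm_of_mem h; rw [h0] at this; simp at this

section Alg
variable {J K : ℍ[ℝ]} (hJ : J ∈ SQ) (hK : K ∈ SQ) (hne : J ≠ K)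

include hJ hK hne in
lemma key_JuJu : J * (J - K)⁻¹ + (J - K)⁻¹ * J = 1 := by
  set d := J - K with hd
  have hd0 : d ≠ 0 := sub_ne_zero_of_ne hne
  have hJJ : J * J = -1 := mul_self_of_mem hJ
  have hKK : K * K = -1 := mul_self_of_mem hK
  have h : d * J + J * d = d * d := by
    simp only [hd, sub_mul, mul_sub, hJJ, hKK]; abel
  have h1 : d⁻¹ * d = 1 := inv_mul_cancel₀ hd0
  have h2 : d * d⁻¹ = 1 := mul_inv_cancel₀ hd0
  calc J * d⁻¹ + d⁻¹ * J
      = d⁻¹ * (d * J + J * d) * d⁻¹ := by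
        rw [mul_add, add_mul, ← mul_assoc, ← mul_assoc, h1, one_mul,
          mul_assoc (d⁻¹ * J) d d⁻¹, h2, mul_one, add_comm]
    _ = 1 := by
        rw [h, ← mul_assoc, mul_assoc d⁻¹ d d, ← mul_assoc, h1, one_mul, h2]

include hJ hK hne in
lemma key_JuJ : J * ((J - K)⁻¹ * J) = J + (J - K)⁻¹ := by
  have h := key_JuJu hJ hK hne
  have hJJ : J * J = -1 := mul_self_of_mem hJ
  have h2 : (J - K)⁻¹ * J = 1 - J * (J - K)⁻¹ := by
    rw [eq_sub_iff_add_eq, add_comm]; exact h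
  rw [h2, mul_sub, mul_one, ← mul_assoc, hJJ]
  simp [sub_eq_add_neg]

omit hJ hK in
include hne in
lemma key_uK : (J - K)⁻¹ * K = (J - K)⁻¹ * J - 1 := by
  have hd0 : J - K ≠ 0 := sub_ne_zero_of_ne hne
  have h1 : (J - K)⁻¹ * (J - K) = 1 := inv_mul_cancel₀ hd0
  rw [mul_sub] at h1
  linear_combination (norm := abel) -h1

include hJ hK hne in
lemma key_JuK : J * ((J - K)⁻¹ * K) = (J - K)⁻¹ := by
  rw [key_uK hne, mul_sub, key_JuJ hJ hK hne, mul_one]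
  abel

end Alg




section CR
variable {J K : ℍ[ℝ]} (hJ : J ∈ SQ) (hK : K ∈ SQ) (hne : J ≠ K)

include hJ hK hne in
lemma e5 : ∀ x : ℍ[ℝ], (J - K)⁻¹ * (J * x) = x - J * ((J - K)⁻¹ * x) := by
  intro x
  have h : (J - K)⁻¹ * J = 1 - J * (J - K)⁻¹ := by
    rw [eq_sub_iff_add_eq, add_comm]; exact key_JuJu hJ hK hne
  rw [← mul_assoc, h, sub_mul, one_mul, mul_assoc]

include hJ hK hne in
lemma e6 : ∀ x : ℍ[ℝ], (J - K)⁻¹ * (K * x) = -(J * ((J - K)⁻¹ * x)) := by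
  intro x
  have h : (J - K)⁻¹ * J = 1 - J * (J - K)⁻¹ := by
    rw [eq_sub_iff_add_eq, add_comm]; exact key_JuJu hJ hK hne
  have h2 : (J - K)⁻¹ * K = -(J * (J - K)⁻¹) := by
    rw [key_uK hne, h]; abel
  rw [← mul_assoc, h2, neg_mul, mul_assoc]

include hJ in
lemma eJJ : ∀ x : ℍ[ℝ], J * (J * x) = -x := by
  intro x; rw [← mul_assoc, mul_self_of_mem hJ, neg_one_mul]

include hJ hK hne in
lemma sigma_cr1 {a a' b b' : ℍ[ℝ]} (ha : a + J * a' = 0) (hb : b + K * b' = 0) :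
    a - J * ((J - K)⁻¹ * (a - b)) = (J - K)⁻¹ * (a' - b') := by
  have ha' : a = -(J * a') := eq_neg_of_add_eq_zero_left ha
  have hb' : b = -(K * b') := eq_neg_of_add_eq_zero_left hb
  subst ha' hb'
  simp only [mul_sub, mul_add, mul_neg, neg_neg, sub_neg_eq_add, e5 hJ hK hne,
    e6 hJ hK hne, eJJ hJ]
  abel

include hJ hK hne in
lemma sigma_cr2 {a a' b b' : ℍ[ℝ]} (ha : a + J * a' = 0) (hb : b + K * b' = 0) :
    (J - K)⁻¹ * (a - b) + (a' - J * ((J - K)⁻¹ * (a' - b'))) = 0 := by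
  have ha' : a = -(J * a') := eq_neg_of_add_eq_zero_left ha
  have hb' : b = -(K * b') := eq_neg_of_add_eq_zero_left hb
  subst ha' hb'
  simp only [mul_sub, mul_add, mul_neg, neg_neg, sub_neg_eq_add, e5 hJ hK hne,
    e6 hJ hK hne, eJJ hJ]
  abel

include hJ hK hne in
lemma rep_cr {L : ℍ[ℝ]} (hLL : L * L = -1) {a a' b b' c c' : ℍ[ℝ]}
    (ha : a + J * a' = 0) (hb : b + K * b' = 0) (hc : c + L * c' = 0) :
    (c - a - (L - J) * ((J - K)⁻¹ * (a - b)))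
      + L * (c' - a' - (L - J) * ((J - K)⁻¹ * (a' - b'))) = 0 := by
  set A := (J - K)⁻¹ * (a - b) with hA
  set A' := (J - K)⁻¹ * (a' - b') with hA'
  have h1 : J * A = a - A' := by
    have := sigma_cr1 hJ hK hne ha hb; rw [← hA, ← hA'] at this
    linear_combination (norm := abel) -this
  have h2 : J * A' = A + a' := by
    have := sigma_cr2 hJ hK hne ha hb; rw [← hA, ← hA'] at this
    linear_combination (norm := abel) -this
  have hc2 : c = -(L * c') := eq_neg_of_add_eq_zero_left hc
  have hLLA : L * (L * A') = -A' := by rw [← mul_assoc, hLL, neg_one_mul]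
  rw [hc2]
  simp only [sub_mul, mul_sub, hLLA, h1, h2, mul_add]
  abel

end CR



/-- componentwise complex conjugation -/
def conjC {n : ℕ} (w : Fin n → ℂ) : Fin n → ℂ := fun k => (starRingEnd ℂ) (w k)

lemma conjC_conjC {n : ℕ} (w : Fin n → ℂ) : conjC (conjC w) = w := by
  funext k; simp [conjC]

lemma continuous_conjC {n : ℕ} : Continuous (conjC (n := n)) :=
  continuous_pi fun k => Complex.continuous_conj.comp (continuous_apply k)

lemma coord_decomp {I : ℍ[ℝ]} (hI : I ∈ SQ) {x y x' y' : ℝ}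
    (h : (x : ℍ[ℝ]) + y • I = (x' : ℍ[ℝ]) + y' • I) : x = x' ∧ y = y' := by
  have hre : x = x' := by
    have := congrArg QuaternionAlgebra.re h
    simpa [Quaternion.re_add, Quaternion.re_coe, Quaternion.re_smul, re_of_mem hI] using this
  refine ⟨hre, ?_⟩
  subst hre
  have h2 : y • I = y' • I := by
    have := h; rwa [add_right_inj] at this
  have h3 : (y - y') • I = 0 := by rw [sub_smul, h2, sub_self]
  rcases smul_eq_zero.1 h3 with h4 | h4
  · linarith [sub_eq_zero.1 (by linarith [h4] : y - y' = 0)]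
  · exact absurd h4 (ne_zero_of_mem hI)

lemma psi_inj {n : ℕ} {I : ℍ[ℝ]} (hI : I ∈ SQ) {w w' : Fin n → ℂ}
    (h : psi I w = psi I w') : w = w' := by
  funext k
  have hk := congrFun h k
  obtain ⟨h1, h2⟩ := coord_decomp hI hk
  exact Complex.ext h1 h2

lemma psi_real {n : ℕ} {I J : ℍ[ℝ]} {w : Fin n → ℂ} (hw : ∀ k, (w k).im = 0) :
    psi I w = psi J w := by
  funext k; simp [psi, hw k]

lemma psi_neg_conj {n : ℕ} (I : ℍ[ℝ]) (w : Fin n → ℂ) :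
    psi (-I) (conjC w) = psi I w := by
  funext k
  simp [psi, conjC, smul_neg, neg_smul]

lemma isRealQ_psi_iff {n : ℕ} {I : ℍ[ℝ]} (hI : I ∈ SQ) {w : Fin n → ℂ} {k : Fin n} :
    IsRealQ (psi I w k) ↔ (w k).im = 0 := by
  constructor
  · rintro ⟨r, hr⟩
    have : ((w k).re : ℍ[ℝ]) + (w k).im • I = (r : ℍ[ℝ]) + (0 : ℝ) • I := by
      simpa [psi] using hr
    exact (coord_decomp hI this).2
  · intro h; exact ⟨(w k).re, by simp [psi, h]⟩

lemma psi_eq_cases {n : ℕ} {I I' : ℍ[ℝ]} (hI : I ∈ SQ) (hI' : I' ∈ SQ)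
    {z z' : Fin n → ℂ} (h : psi I' z' = psi I z) (hnr : ¬ ∀ k, (z k).im = 0) :
    (I' = I ∧ z' = z) ∨ (I' = -I ∧ z' = conjC z) := by
  push_neg at hnr
  obtain ⟨k₁, hk₁⟩ := hnr
  have hco : ∀ k, (z' k).re = (z k).re ∧ (z' k).im • I' = (z k).im • I := by
    intro k
    have hk := congrFun h k
    have hre : (z' k).re = (z k).re := by
      have := congrArg QuaternionAlgebra.re hk
      simpa [psi, Quaternion.re_add, Quaternion.re_coe, Quaternion.re_smul,
        re_of_mem hI, re_of_mem hI'] using this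
    refine ⟨hre, ?_⟩
    have := hk
    simp only [psi] at this
    rw [hre] at this
    rwa [add_right_inj] at this
  have h1 := (hco k₁).2
  have him : (z' k₁).im ≠ 0 := by
    intro h0
    rw [h0, zero_smul] at h1
    have := h1.symm
    rcases smul_eq_zero.1 this with h2 | h2
    · exact hk₁ h2
    · exact ne_zero_of_mem hI h2
  -- norms give |im z'| = |im z|
  have hnorm : |(z' k₁).im| = |(z k₁).im| := by
    have := congrArg norm h1
    rwa [norm_smul, norm_smul, norm_of_mem hI, norm_of_mem hI', mul_one, mul_one,
      Real.norm_eq_abs, Real.norm_eq_abs] at this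
  rcases abs_eq_abs.1 hnorm with hy | hy
  · left
    have hI'I : I' = I := by
      have : (z' k₁).im • I' = (z' k₁).im • I := by rw [h1, hy]
      exact smul_right_injective _ him this
    refine ⟨hI'I, ?_⟩
    funext k
    have h2 := (hco k).2
    rw [hI'I] at h2
    by_cases hz : (z k).im = 0
    · refine Complex.ext (hco k).1 ?_
      rw [hz, zero_smul] at h2
      rcases smul_eq_zero.1 h2 with h3 | h3
      · rw [h3, hz]
      · exact absurd h3 (ne_zero_of_mem hI)
    · refine Complex.ext (hco k).1 ?_
      have := smul_left_injective ℝ (M := ℍ[ℝ]) (ne_zero_of_mem hI) h2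
      exact this
  · right
    have hI'I : I' = -I := by
      have : (z' k₁).im • I' = (z' k₁).im • (-I) := by rw [h1, hy]; simp [neg_smul, smul_neg]
      exact smul_right_injective _ him this
    refine ⟨hI'I, ?_⟩
    funext k
    have h2 := (hco k).2
    rw [hI'I] at h2
    have h2' : (-(z' k).im) • I = (z k).im • I := by
      rw [neg_smul]; rw [smul_neg] at h2; exact h2
    have : -(z' k).im = (z k).im := smul_left_injective ℝ (ne_zero_of_mem hI) h2'
    refine Complex.ext (hco k).1 ?_
    simp [conjC]
    linarith [this]

lemma frakI_eq_zero {n : ℕ} {q : Fin n → ℍ[ℝ]} (h : ∀ k, IsRealQ (q k)) : frakI q = 0 :=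
  dif_pos h

lemma frakI_cases {n : ℕ} {I : ℍ[ℝ]} (hI : I ∈ SQ) {w : Fin n → ℂ}
    (hw : ¬ ∀ k, (w k).im = 0) :
    frakI (psi I w) = I ∨ frakI (psi I w) = -I := by
  have hnr : ¬ ∀ k, IsRealQ (psi I w k) := by
    intro h; exact hw fun k => (isRealQ_psi_iff hI).1 (h k)
  have hex : ∃ k, ¬ IsRealQ (psi I w k) := by push_neg at hnr; exact hnr
  obtain ⟨k₁, hk₁⟩ := hex
  have hfne : ((Finset.univ.filter fun k => ¬ IsRealQ (psi I w k))).Nonempty :=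
    ⟨k₁, Finset.mem_filter.mpr ⟨Finset.mem_univ _, hk₁⟩⟩
  rw [frakI, dif_neg hnr]
  set k₀ := (Finset.univ.filter fun k => ¬ IsRealQ (psi I w k)).min' (by
      push_neg at hnr
      obtain ⟨k, hk⟩ := hnr
      exact ⟨k, Finset.mem_filter.mpr ⟨Finset.mem_univ k, hk⟩⟩) with hk₀
  dsimp only
  have hk₀mem : ¬ IsRealQ (psi I w k₀) := by
    have := Finset.min'_mem (Finset.univ.filter fun k => ¬ IsRealQ (psi I w k)) hfne
    have h2 : (Finset.univ.filter fun k => ¬ IsRealQ (psi I w k)).min' hfne = k₀ := by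
      rw [hk₀]
    rw [h2] at this
    exact (Finset.mem_filter.1 this).2
  have hy : (w k₀).im ≠ 0 := fun h0 => hk₀mem ((isRealQ_psi_iff hI).2 h0)
  have hre : (psi I w k₀).re = (w k₀).re := by
    simp [psi, Quaternion.re_add, Quaternion.re_coe, Quaternion.re_smul, re_of_mem hI]
  have hsub : psi I w k₀ - ((psi I w k₀).re : ℍ[ℝ]) = (w k₀).im • I := by
    rw [hre]; simp [psi]
  rw [hsub, norm_smul, norm_of_mem hI, mul_one, Real.norm_eq_abs, smul_smul]
  rcases lt_or_gt_of_ne hy with hneg | hpos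
  · right
    rw [abs_of_neg hneg]
    rw [show (-(w k₀).im)⁻¹ * (w k₀).im = -1 by field_simp]
    simp
  · left
    rw [abs_of_pos hpos]
    rw [show ((w k₀).im)⁻¹ * (w k₀).im = 1 by field_simp]
    simp




/-- L1: identity theorem on a ball from vanishing on a subball. -/
lemma zero_on_ball_of_subball {n : ℕ} {h : (Fin n → ℂ) → ℂ} {c : Fin n → ℂ} {R : ℝ}
    (hd : DifferentiableOn ℂ h (Metric.ball c R)) {c' : Fin n → ℂ} {δ : ℝ} (hδ : 0 < δ)
    (hsub : Metric.ball c' δ ⊆ Metric.ball c R)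
    (hz : ∀ w ∈ Metric.ball c' δ, h w = 0) : ∀ w ∈ Metric.ball c R, h w = 0 := by
  intro w hw
  by_cases hwc : w = c'
  · exact hz w (by simp [hwc, Metric.mem_ball, hδ])
  set d : Fin n → ℂ := w - c' with hdd
  have hd0 : d ≠ 0 := sub_ne_zero_of_ne hwc
  have hdn : (0:ℝ) < ‖d‖ := norm_pos_iff.2 hd0
  set φ : ℂ → ℂ := fun ζ => h (c' + ζ • d) with hφ
  set V : Set ℂ := {ζ | c' + ζ • d ∈ Metric.ball c R} with hV
  have haff : Continuous fun ζ : ℂ => c' + ζ • d :=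
    continuous_const.add (continuous_id.smul continuous_const)
  have hVopen : IsOpen V := Metric.isOpen_ball.preimage haff
  have hVconv : Convex ℝ V := by
    intro ζ₁ h₁ ζ₂ h₂ s t hs ht hst
    show c' + (s • ζ₁ + t • ζ₂) • d ∈ Metric.ball c R
    have ht' : t = 1 - s := by linarith
    subst ht'
    have heq : c' + (s • ζ₁ + (1 - s) • ζ₂) • d
        = s • (c' + ζ₁ • d) + (1 - s) • (c' + ζ₂ • d) := by
      funext k
      simp only [Pi.add_apply, Pi.smul_apply, smul_eq_mul, Complex.real_smul]
      push_cast
      ring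
    rw [heq]
    exact convex_ball c R h₁ h₂ hs ht hst
  have hφd : DifferentiableOn ℂ φ V := by
    apply hd.comp
    · exact ((differentiable_const c').add (differentiable_id.smul_const d)).differentiableOn
    · intro ζ hζ; exact hζ
  have hφa : AnalyticOnNhd ℂ φ V := hφd.analyticOnNhd hVopen
  have h0V : (0 : ℂ) ∈ V := by
    show c' + (0:ℂ) • d ∈ Metric.ball c R
    rw [zero_smul, add_zero]
    exact hsub (by simp [Metric.mem_ball, hδ])
  have h1V : (1 : ℂ) ∈ V := by
    show c' + (1:ℂ) • d ∈ Metric.ball c R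
    rw [one_smul, hdd, add_sub_cancel]
    exact hw
  have hfreq : ∃ᶠ ζ in 𝓝[≠] (0:ℂ), φ ζ = 0 := by
    have hev : ∀ᶠ ζ in 𝓝 (0:ℂ), φ ζ = 0 := by
      filter_upwards [Metric.ball_mem_nhds (0:ℂ) (show (0:ℝ) < δ / ‖d‖ by positivity)]
        with ζ hζ
      apply hz
      rw [Metric.mem_ball] at hζ ⊢
      rw [dist_eq_norm, add_sub_cancel_left, norm_smul]
      rw [dist_eq_norm, sub_zero] at hζ
      calc ‖ζ‖ * ‖d‖ < (δ / ‖d‖) * ‖d‖ := by exact mul_lt_mul_of_pos_right hζ hdn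
        _ = δ := by field_simp
    exact (hev.filter_mono nhdsWithin_le_nhds).frequently
  have heq := hφa.eqOn_zero_of_preconnected_of_frequently_eq_zero hVconv.isPreconnected h0V hfreq
  have := heq h1V
  rw [hφ] at this
  simpa [one_smul, hdd, add_sub_cancel] using this

/-- L2: vanishing on the real points of a real-centered ball propagates to the ball. -/
lemma zero_on_ball_of_real {n : ℕ} {h : (Fin n → ℂ) → ℂ} {c : Fin n → ℂ} {R : ℝ}
    (hR : 0 < R) (hd : DifferentiableOn ℂ h (Metric.ball c R)) (hcr : ∀ k, (c k).im = 0)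
    (hz : ∀ w ∈ Metric.ball c R, (∀ k, (w k).im = 0) → h w = 0) :
    ∀ w ∈ Metric.ball c R, h w = 0 := by
  suffices hcl : ∀ s : Finset (Fin n), ∀ w ∈ Metric.ball c R,
      (∀ k, k ∉ s → (w k).im = 0) → h w = 0 by
    intro w hw
    exact hcl Finset.univ w hw (fun k hk => absurd (Finset.mem_univ k) hk)
  intro s
  induction s using Finset.induction_on with
  | empty => intro w hw hsup; exact hz w hw fun k => hsup k (Finset.notMem_empty k)
  | @insert ℓ s hℓs IH =>
    intro w hw hsup
    set d : Fin n → ℂ := Pi.single ℓ 1 with hdd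
    set base : Fin n → ℂ := Function.update w ℓ (0:ℂ) with hbase
    have hupd : ∀ ζ : ℂ, Function.update w ℓ ζ = base + ζ • d := by
      intro ζ; funext k
      by_cases hk : k = ℓ
      · subst hk
        simp [hbase, hdd, Function.update_self, Pi.single_eq_same]
      · simp [hbase, hdd, Function.update_of_ne hk, Pi.single_eq_of_ne hk]
    set φ : ℂ → ℂ := fun ζ => h (base + ζ • d) with hφ
    set V : Set ℂ := {ζ | base + ζ • d ∈ Metric.ball c R} with hV
    have haff : Continuous fun ζ : ℂ => base + ζ • d :=
      continuous_const.add (continuous_id.smul continuous_const)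
    have hVopen : IsOpen V := Metric.isOpen_ball.preimage haff
    have hVconv : Convex ℝ V := by
      intro ζ₁ h₁ ζ₂ h₂ a t ha ht hat
      show base + (a • ζ₁ + t • ζ₂) • d ∈ Metric.ball c R
      have ht' : t = 1 - a := by linarith
      subst ht'
      have heq : base + (a • ζ₁ + (1 - a) • ζ₂) • d
          = a • (base + ζ₁ • d) + (1 - a) • (base + ζ₂ • d) := by
        funext k
        simp only [Pi.add_apply, Pi.smul_apply, smul_eq_mul, Complex.real_smul]
        push_cast
        ring
      rw [heq]
      exact convex_ball c R h₁ h₂ ha ht hat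
    have hφd : DifferentiableOn ℂ φ V := by
      apply hd.comp
      · exact ((differentiable_const base).add (differentiable_id.smul_const d)).differentiableOn
      · intro ζ hζ; exact hζ
    have hφa : AnalyticOnNhd ℂ φ V := hφd.analyticOnNhd hVopen
    -- real values are zero by the induction hypothesis
    have hwt : ∀ t : ℝ, Function.update w ℓ (t : ℂ) ∈ Metric.ball c R →
        h (Function.update w ℓ (t : ℂ)) = 0 := by
      intro t hmem
      refine IH _ hmem ?_
      intro k hk
      by_cases hkℓ : k = ℓ
      · subst hkℓ; simp [Function.update_self]
      · rw [Function.update_of_ne hkℓ]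
        exact hsup k (by simp [Finset.mem_insert, hkℓ, hk])
    set t₀ : ℝ := (w ℓ).re with ht₀
    have hmem_t : ∀ t : ℝ, |t - t₀| < R - dist w c → ((t : ℂ)) ∈ V := by
      intro t htd
      show base + (t:ℂ) • d ∈ Metric.ball c R
      rw [← hupd]
      rw [Metric.mem_ball] at hw ⊢
      rw [dist_pi_lt_iff hR]
      intro k
      by_cases hkℓ : k = ℓ
      · subst hkℓ
        rw [Function.update_self]
        have hcℓ : c k = ((c k).re : ℂ) := Complex.ext rfl (by simp [hcr k])
        rw [Complex.dist_eq, hcℓ]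
        rw [show ((t:ℂ) - ((c k).re : ℂ)) = ((t - (c k).re : ℝ) : ℂ) by push_cast; ring]
        rw [Complex.norm_real, Real.norm_eq_abs]
        have h1 : |t₀ - (c k).re| ≤ dist w c := by
          have h2 : |((w k) - c k).re| ≤ ‖(w k) - c k‖ := Complex.abs_re_le_norm _
          rw [Complex.sub_re] at h2
          calc |t₀ - (c k).re| = |(w k).re - (c k).re| := by rw [ht₀]
            _ ≤ ‖(w k) - c k‖ := h2
            _ = dist (w k) (c k) := (Complex.dist_eq _ _).symm
            _ ≤ dist w c := dist_le_pi_dist w c k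
        calc |t - (c k).re| ≤ |t - t₀| + |t₀ - (c k).re| := abs_sub_le _ _ _
          _ < (R - dist w c) + dist w c := by exact add_lt_add_of_lt_of_le htd h1
          _ = R := by ring
      · rw [Function.update_of_ne hkℓ]
        calc dist (w k) (c k) ≤ dist w c := dist_le_pi_dist w c k
          _ < R := hw
    have hRd : 0 < R - dist w c := by
      rw [Metric.mem_ball] at hw; linarith
    have ht₀V : ((t₀ : ℂ)) ∈ V := hmem_t t₀ (by simp [hRd])
    have hfreq : ∃ᶠ ζ in 𝓝[≠] ((t₀ : ℂ)), φ ζ = 0 := by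
      rw [Filter.frequently_iff]
      intro Uf hUf
      rw [Metric.mem_nhdsWithin_iff] at hUf
      obtain ⟨ε, hε, hsubU⟩ := hUf
      set η := min (ε / 2) ((R - dist w c) / 2) with hη
      have hηpos : 0 < η := by positivity
      refine ⟨((t₀ + η : ℝ) : ℂ), ?_, ?_⟩
      · apply hsubU
        constructor
        · rw [Metric.mem_ball, Complex.dist_eq]
          rw [show ((t₀ + η : ℝ) : ℂ) - ((t₀ : ℝ) : ℂ) = ((η : ℝ) : ℂ) by push_cast; ring]
          rw [Complex.norm_real, Real.norm_eq_abs, abs_of_pos hηpos]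
          calc η ≤ ε / 2 := min_le_left _ _
            _ < ε := by linarith
        · show ((t₀ + η : ℝ) : ℂ) ≠ ((t₀ : ℝ) : ℂ)
          intro hcon
          have := Complex.ofReal_injective hcon
          linarith
      · have hmem : ((t₀ + η : ℝ) : ℂ) ∈ V := by
          apply hmem_t
          rw [show t₀ + η - t₀ = η by ring, abs_of_pos hηpos]
          calc η ≤ (R - dist w c) / 2 := min_le_right _ _
            _ < R - dist w c := by linarith
        have hb : base + ((t₀ + η : ℝ) : ℂ) • d ∈ Metric.ball c R := hmem
        rw [← hupd] at hb
        have := hwt (t₀ + η) hb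
        show h (base + ((t₀ + η : ℝ) : ℂ) • d) = 0
        rw [← hupd]
        exact this
    have heq := hφa.eqOn_zero_of_preconnected_of_frequently_eq_zero hVconv.isPreconnected
      ht₀V hfreq
    have hwV : (w ℓ) ∈ V := by
      show base + (w ℓ) • d ∈ Metric.ball c R
      rw [← hupd, Function.update_eq_self]
      exact hw
    have := heq hwV
    rw [hφ] at this
    simp only at this
    rw [← hupd, Function.update_eq_self] at this
    exact this

/-- L3: propagation of local vanishing along a path. -/
lemma zero_at_path_end {n : ℕ} {h : (Fin n → ℂ) → ℂ} {U : Set (Fin n → ℂ)} (hU : IsOpen U)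
    (hd : DifferentiableOn ℂ h U) {γ : unitInterval → (Fin n → ℂ)} (hγ : Continuous γ)
    (him : ∀ t, γ t ∈ U) (h0 : ∀ᶠ w in 𝓝 (γ 0), h w = 0) : h (γ 1) = 0 := by
  set T : Set unitInterval := γ ⁻¹' {x | ∀ᶠ w in 𝓝 x, h w = 0} with hT
  have hTopen : IsOpen T :=
    IsOpen.preimage hγ (isOpen_setOf_eventually_nhds (p := fun w => h w = 0))
  have hTclosed : IsClosed T := by
    apply isClosed_of_closure_subset
    intro t ht
    obtain ⟨ε, hε, hball⟩ := Metric.isOpen_iff.1 hU (γ t) (him t)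
    have hnb : {s : unitInterval | γ s ∈ Metric.ball (γ t) (ε/2)} ∈ 𝓝 t :=
      hγ.continuousAt.preimage_mem_nhds (Metric.ball_mem_nhds _ (by positivity))
    obtain ⟨s, hs1, hs2⟩ := mem_closure_iff_nhds.1 ht _ hnb
    obtain ⟨δ, hδ, hzero⟩ := Metric.eventually_nhds_iff_ball.1 hs2
    have hδ' : 0 < min δ (ε/2) := by positivity
    have hsub : Metric.ball (γ s) (min δ (ε/2)) ⊆ Metric.ball (γ t) ε := by
      intro x hx
      rw [Metric.mem_ball] at hx ⊢
      calc dist x (γ t) ≤ dist x (γ s) + dist (γ s) (γ t) := dist_triangle _ _ _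
        _ < min δ (ε/2) + ε/2 := add_lt_add hx hs1
        _ ≤ ε/2 + ε/2 := by
            have := min_le_right δ (ε/2); linarith
        _ = ε := by ring
    have hzero' : ∀ w ∈ Metric.ball (γ t) ε, h w = 0 := by
      apply zero_on_ball_of_subball (hd.mono hball) hδ' hsub
      intro w hwmem
      exact hzero w (Metric.mem_ball.1 (lt_of_lt_of_le (Metric.mem_ball.1 hwmem)
        (min_le_left _ _)))
    show t ∈ T
    rw [hT]
    simp only [Set.mem_preimage, Set.mem_setOf_eq]
    filter_upwards [Metric.ball_mem_nhds (γ t) hε] with w hwmem using hzero' w hwmem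
  have hTuniv : T = Set.univ :=
    IsClopen.eq_univ ⟨hTclosed, hTopen⟩ (Set.nonempty_of_mem (show (0:unitInterval) ∈ T from h0))
  have h1T : (1 : unitInterval) ∈ T := by rw [hTuniv]; trivial
  have h1T' : ∀ᶠ w in 𝓝 (γ 1), h w = 0 := h1T
  exact h1T'.self_of_nhds




/-- L4: a left `L`-holomorphic quaternionic function vanishing on the reals vanishes at
the end of any path starting at a real point. -/
lemma quat_zero_at_path_end {n : ℕ} {U : Set (Fin n → ℂ)} (hU : IsOpen U) {L : ℍ[ℝ]}
    (hLL : L * L = -1) {g : (Fin n → ℂ) → ℍ[ℝ]}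
    (hdiff : ∀ z ∈ U, DifferentiableAt ℝ g z)
    (hcr : ∀ z ∈ U, ∀ ℓ : Fin n,
      fderiv ℝ g z (Pi.single ℓ 1) + L * fderiv ℝ g z (Pi.single ℓ Complex.I) = 0)
    (hreal : ∀ w ∈ U, (∀ k, (w k).im = 0) → g w = 0)
    {γ : unitInterval → (Fin n → ℂ)} (hγ : Continuous γ) (hγ0 : ∀ k, ((γ 0) k).im = 0)
    (him : ∀ t, γ t ∈ U) : g (γ 1) = 0 := by
  suffices hsuff : ∀ π : ℍ[ℝ] →ₗ[ℝ] ℝ, π (g (γ 1)) = 0 by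
    have hre : ∀ (c : ℍ[ℝ] → ℝ), (∀ a b, c (a + b) = c a + c b) →
        (∀ (r : ℝ) a, c (r • a) = r * c a) → c (g (γ 1)) = 0 := by
      intro c hadd hsmul
      refine hsuff (IsLinearMap.mk' c ⟨hadd, ?_⟩)
      intro r a
      rw [hsmul r a, smul_eq_mul]
    have h1 := hre QuaternionAlgebra.re (fun a b => by simp) (fun r a => by simp)
    have h2 := hre QuaternionAlgebra.imI (fun a b => by simp) (fun r a => by simp)
    have h3 := hre QuaternionAlgebra.imJ (fun a b => by simp) (fun r a => by simp)
    have h4 := hre QuaternionAlgebra.imK (fun a b => by simp) (fun r a => by simp)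
    rw [Quaternion.ext_iff]
    simp [h1, h2, h3, h4]
  intro π
  -- the complexified scalar function
  set Tlin : ℍ[ℝ] →ₗ[ℝ] ℂ :=
    { toFun := fun p => (π p : ℂ) - (π (L * p) : ℂ) * Complex.I,
      map_add' := by
        intro a b
        simp only [mul_add, map_add]
        push_cast
        ring,
      map_smul' := by
        intro r a
        simp only [mul_smul_comm, map_smul, smul_eq_mul, RingHom.id_apply]
        push_cast
        simp [Complex.real_smul]
        ring } with hTlin
  set T : ℍ[ℝ] →L[ℝ] ℂ := { Tlin with cont := Tlin.continuous_of_finiteDimensional } with hT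
  have hTapply : ∀ p, T p = (π p : ℂ) - (π (L * p) : ℂ) * Complex.I := fun p => rfl
  have hTkey : ∀ p, T p = -Complex.I * T (L * p) := by
    intro p
    rw [hTapply, hTapply]
    have : L * (L * p) = -p := by rw [← mul_assoc, hLL, neg_one_mul]
    rw [this, map_neg]
    push_cast
    linear_combination ((π p : ℂ)) * Complex.I_sq
  set G : (Fin n → ℂ) → ℂ := fun w => T (g w) with hG
  -- real-differentiability and fderiv of G
  have hGd : ∀ z ∈ U, HasFDerivAt G (T.comp (fderiv ℝ g z)) z := by
    intro z hz
    exact T.hasFDerivAt.comp z (hdiff z hz).hasFDerivAt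
  -- per-coordinate CR for G
  have hGcr : ∀ z ∈ U, ∀ ℓ : Fin n,
      (T.comp (fderiv ℝ g z)) (Pi.single ℓ Complex.I)
        = Complex.I * (T.comp (fderiv ℝ g z)) (Pi.single ℓ 1) := by
    intro z hz ℓ
    have h1 := hcr z hz ℓ
    have h2 : fderiv ℝ g z (Pi.single ℓ 1) = -(L * fderiv ℝ g z (Pi.single ℓ Complex.I)) :=
      eq_neg_of_add_eq_zero_left h1
    rw [ContinuousLinearMap.comp_apply, ContinuousLinearMap.comp_apply, h2, map_neg]
    rw [hTkey (fderiv ℝ g z (Pi.single ℓ Complex.I))]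
    ring
  -- complex differentiability
  have hGdiffC : DifferentiableOn ℂ G U := by
    intro z hz
    set D := T.comp (fderiv ℝ g z) with hD
    set D' : (Fin n → ℂ) →L[ℂ] ℂ :=
      ∑ ℓ : Fin n, (ContinuousLinearMap.proj ℓ).smulRight (D (Pi.single ℓ 1)) with hD'
    have hD'apply : ∀ v, D' v = ∑ ℓ : Fin n, (v ℓ) * D (Pi.single ℓ 1) := by
      intro v
      rw [hD', ContinuousLinearMap.sum_apply]
      refine Finset.sum_congr rfl fun ℓ _ => ?_
      simp [ContinuousLinearMap.smulRight_apply, smul_eq_mul]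
    have hDapply : ∀ v, D v = D' v := by
      intro v
      rw [hD'apply]
      have hv : v = ∑ ℓ : Fin n, Pi.single ℓ (v ℓ) := (Finset.univ_sum_single v).symm
      calc D v = D (∑ ℓ : Fin n, Pi.single ℓ (v ℓ)) := by rw [← hv]
        _ = ∑ ℓ : Fin n, D (Pi.single ℓ (v ℓ)) := map_sum D _ _
        _ = ∑ ℓ : Fin n, (v ℓ) * D (Pi.single ℓ 1) := by
            congr 1
            funext ℓ
            have hsingle : Pi.single ℓ (v ℓ)
                = (v ℓ).re • (Pi.single ℓ (1:ℂ) : Fin n → ℂ)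
                  + (v ℓ).im • (Pi.single ℓ Complex.I : Fin n → ℂ) := by
              funext k
              by_cases hk : k = ℓ
              · subst hk
                simp only [Pi.single_eq_same, Pi.add_apply, Pi.smul_apply, Pi.single_eq_same]
                rw [Complex.real_smul, Complex.real_smul]
                rw [mul_one]
                exact (Complex.re_add_im (v k)).symm
              · simp [Pi.single_eq_of_ne hk]
            rw [hsingle, map_add, map_smul, map_smul]
            rw [show D (Pi.single ℓ Complex.I) = Complex.I * D (Pi.single ℓ 1) from
              hGcr z hz ℓ]
            rw [Complex.real_smul, Complex.real_smul]
            linear_combination (Complex.re_add_im (v ℓ)) * (D (Pi.single ℓ 1))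

    have hhd : HasFDerivAt G D' z := by
      have h1 : HasFDerivAt G D z := hGd z hz
      rw [hasFDerivAt_iff_isLittleO_nhds_zero] at h1 ⊢
      have : (fun h => G (z + h) - G z - D' h) = (fun h => G (z + h) - G z - D h) := by
        funext h; rw [← hDapply h]
      rw [this]
      exact h1
    exact hhd.differentiableAt.differentiableWithinAt
  -- vanishing near the start point
  obtain ⟨R, hR, hball⟩ := Metric.isOpen_iff.1 hU (γ 0) (him 0)
  have hGreal : ∀ w ∈ U, (∀ k, (w k).im = 0) → G w = 0 := by
    intro w hw hwr
    rw [hG]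
    simp only
    rw [hreal w hw hwr, map_zero]
  have hGball : ∀ w ∈ Metric.ball (γ 0) R, G w = 0 :=
    zero_on_ball_of_real hR (hGdiffC.mono hball) hγ0
      (fun w hw hwr => hGreal w (hball hw) hwr)
  have h0 : ∀ᶠ w in 𝓝 (γ 0), G w = 0 := by
    filter_upwards [Metric.ball_mem_nhds (γ 0) hR] with w hw using hGball w hw
  have hend : G (γ 1) = 0 := zero_at_path_end hU hGdiffC hγ him h0
  -- extract the real part
  have := congrArg Complex.re hend
  rw [hG] at this
  simp only at this
  rw [hTapply] at this
  simpa using this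




/-- differentiability and CR equations on a slice, in terms of full fderiv -/
lemma slice_diff {n : ℕ} {Ω : Set (Fin n → ℍ[ℝ])} (ho : SliceOpen Ω)
    {f : (Fin n → ℍ[ℝ]) → ℍ[ℝ]} (hf : SliceRegular Ω f)
    {J : ℍ[ℝ]} (hJ : J ∈ SQ) {z : Fin n → ℂ} (hz : psi J z ∈ Ω) :
    DifferentiableAt ℝ (fun w => f (psi J w)) z ∧
    ∀ ℓ : Fin n, fderiv ℝ (fun w => f (psi J w)) z (Pi.single ℓ 1)
      + J * fderiv ℝ (fun w => f (psi J w)) z (Pi.single ℓ Complex.I) = 0 := by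
  have hopen := ho J hJ
  have hmem : z ∈ {w : Fin n → ℂ | psi J w ∈ Ω} := hz
  obtain ⟨hd, hcr⟩ := hf J hJ z hz
  have hnhds : {w : Fin n → ℂ | psi J w ∈ Ω} ∈ 𝓝 z := hopen.mem_nhds hmem
  refine ⟨hd.differentiableAt hnhds, ?_⟩
  intro ℓ
  have := hcr ℓ
  rwa [fderivWithin_of_isOpen hopen hmem] at this

/-- the representation formula along a path -/
lemma representation {n : ℕ} {Ω₂ : Set (Fin n → ℍ[ℝ])} (ho2 : SliceOpen Ω₂)
    {f : (Fin n → ℍ[ℝ]) → ℍ[ℝ]} (hf : SliceRegular Ω₂ f) {γ : PathC n}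
    (hγc : Continuous γ) (hγ0 : ∀ k, ((γ 0) k).im = 0)
    {J K L : ℍ[ℝ]} (hJ : J ∈ SGamma Ω₂ γ) (hK : K ∈ SGamma Ω₂ γ) (hL : L ∈ SGamma Ω₂ γ)
    (hne : J ≠ K) :
    f (psi L (γ 1))
      = (f (psi J (γ 1)) - J * ((J - K)⁻¹ * (f (psi J (γ 1)) - f (psi K (γ 1)))))
        + L * ((J - K)⁻¹ * (f (psi J (γ 1)) - f (psi K (γ 1)))) := by
  set U : Set (Fin n → ℂ) :=
    {w | psi J w ∈ Ω₂} ∩ ({w | psi K w ∈ Ω₂} ∩ {w | psi L w ∈ Ω₂}) with hU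
  have hUopen : IsOpen U := (ho2 J hJ.1).inter ((ho2 K hK.1).inter (ho2 L hL.1))
  set g : (Fin n → ℂ) → ℍ[ℝ] := fun w => f (psi L w) - f (psi J w)
      - (L - J) * ((J - K)⁻¹ * (f (psi J w) - f (psi K w))) with hg
  have hgderiv : ∀ z ∈ U, HasFDerivAt g
      ((fderiv ℝ (fun w => f (psi L w)) z - fderiv ℝ (fun w => f (psi J w)) z)
        - (L - J) • ((J - K)⁻¹ • (fderiv ℝ (fun w => f (psi J w)) z
            - fderiv ℝ (fun w => f (psi K w)) z))) z := by
    intro z hz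
    obtain ⟨hzJ, hzK, hzL⟩ := hz
    have hdJ := (slice_diff ho2 hf hJ.1 hzJ).1.hasFDerivAt
    have hdK := (slice_diff ho2 hf hK.1 hzK).1.hasFDerivAt
    have hdL := (slice_diff ho2 hf hL.1 hzL).1.hasFDerivAt
    exact (hdL.sub hdJ).sub (((hdJ.sub hdK).const_mul ((J - K)⁻¹)).const_mul (L - J))
  have hdiff : ∀ z ∈ U, DifferentiableAt ℝ g z := fun z hz =>
    (hgderiv z hz).differentiableAt
  have hcr : ∀ z ∈ U, ∀ ℓ : Fin n,
      fderiv ℝ g z (Pi.single ℓ 1) + L * fderiv ℝ g z (Pi.single ℓ Complex.I) = 0 := by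
    intro z hz ℓ
    obtain ⟨hzJ, hzK, hzL⟩ := hz
    have hcrJ := (slice_diff ho2 hf hJ.1 hzJ).2 ℓ
    have hcrK := (slice_diff ho2 hf hK.1 hzK).2 ℓ
    have hcrL := (slice_diff ho2 hf hL.1 hzL).2 ℓ
    rw [(hgderiv z ⟨hzJ, hzK, hzL⟩).fderiv]
    simp only [ContinuousLinearMap.sub_apply, ContinuousLinearMap.smul_apply, smul_eq_mul]
    exact rep_cr hJ.1 hK.1 hne (mul_self_of_mem hL.1) hcrJ hcrK hcrL
  have hreal : ∀ w ∈ U, (∀ k, (w k).im = 0) → g w = 0 := by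
    intro w _ hwr
    rw [hg]
    simp only
    rw [psi_real (I := L) (J := J) hwr, psi_real (I := K) (J := J) hwr]
    simp
  have him : ∀ t, γ t ∈ U := fun t => ⟨hJ.2 t, hK.2 t, hL.2 t⟩
  have hzero := quat_zero_at_path_end hUopen (mul_self_of_mem hL.1) hdiff hcr hreal
    hγc hγ0 him
  rw [hg] at hzero
  simp only at hzero
  rw [sub_mul] at hzero
  linear_combination (norm := abel) hzero

/-- every weakly slice regular function on a slice-open set is path-slice -/
theorem exists_stem {n : ℕ} {Ω₂ : Set (Fin n → ℍ[ℝ])} (ho2 : SliceOpen Ω₂)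
    {f : (Fin n → ℍ[ℝ]) → ℍ[ℝ]} (hf : SliceRegular Ω₂ f) :
    ∃ F : PathC n → ℍ[ℝ] × ℍ[ℝ], IsStem Ω₂ f F := by
  refine ⟨fun γ =>
    if h : ∃ p : ℍ[ℝ] × ℍ[ℝ], p.1 ∈ SGamma Ω₂ γ ∧ p.2 ∈ SGamma Ω₂ γ ∧ p.1 ≠ p.2 then
      (f (psi (Classical.choose h).1 (γ 1))
        - (Classical.choose h).1 * (((Classical.choose h).1 - (Classical.choose h).2)⁻¹
            * (f (psi (Classical.choose h).1 (γ 1)) - f (psi (Classical.choose h).2 (γ 1)))),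
       ((Classical.choose h).1 - (Classical.choose h).2)⁻¹
          * (f (psi (Classical.choose h).1 (γ 1)) - f (psi (Classical.choose h).2 (γ 1))))
    else if h1 : ∃ J, J ∈ SGamma Ω₂ γ then (f (psi (Classical.choose h1) (γ 1)), 0)
    else 0, ?_⟩
  intro γ hγ L hL
  beta_reduce
  by_cases h : ∃ p : ℍ[ℝ] × ℍ[ℝ], p.1 ∈ SGamma Ω₂ γ ∧ p.2 ∈ SGamma Ω₂ γ ∧ p.1 ≠ p.2
  · rw [dif_pos h]
    obtain ⟨hJ, hK, hne⟩ := Classical.choose_spec h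
    exact representation ho2 hf hγ.1.1 hγ.1.2 hJ hK hL hne
  · rw [dif_neg h]
    have h1 : ∃ J, J ∈ SGamma Ω₂ γ := ⟨L, hL⟩
    rw [dif_pos h1]
    have hLe : L = Classical.choose h1 := by
      by_contra hne
      exact h ⟨(Classical.choose h1, L), Classical.choose_spec h1, hL,
        fun hc => hne hc.symm⟩
    rw [← hLe]
    simp




lemma unit_coe_zero : ((0 : unitInterval) : ℝ) = 0 := rfl
lemma unit_coe_one : ((1 : unitInterval) : ℝ) = 1 := rfl

lemma path_congr {n : ℕ} (γ : PathC n) {a b : unitInterval} (h : (a:ℝ) = (b:ℝ)) :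
    γ a = γ b := congrArg γ (Subtype.ext h)

lemma coe_projIcc01 {x : ℝ} (h0 : 0 ≤ x) (h1 : x ≤ 1) :
    ((Set.projIcc (0:ℝ) 1 zero_le_one x : unitInterval) : ℝ) = x := by
  rw [Set.projIcc_of_mem zero_le_one ⟨h0, h1⟩]

/-! ### concatSeg lemmas -/

lemma concatSeg_zero {n : ℕ} (γ : PathC n) (z : Fin n → ℂ) : concatSeg γ z 0 = γ 0 := by
  rw [concatSeg]
  rw [dif_pos (by rw [unit_coe_zero]; norm_num : ((0:unitInterval):ℝ) ≤ 1/2)]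
  exact path_congr γ (by show 2 * ((0:unitInterval):ℝ) = ((0:unitInterval):ℝ); rw [unit_coe_zero]; norm_num)

lemma concatSeg_one {n : ℕ} (γ : PathC n) (z : Fin n → ℂ) : concatSeg γ z 1 = z := by
  rw [concatSeg]
  rw [dif_neg (by rw [unit_coe_one]; norm_num : ¬ ((1:unitInterval):ℝ) ≤ 1/2)]
  rw [unit_coe_one]
  norm_num

lemma concatSeg_continuous {n : ℕ} {γ : PathC n} (hγ : Continuous γ) (z : Fin n → ℂ) :
    Continuous (concatSeg γ z) := by
  have key : concatSeg γ z = fun t : unitInterval =>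
      if (t:ℝ) ≤ 1/2 then γ (Set.projIcc 0 1 zero_le_one (2*(t:ℝ)))
      else (1 - (2*(t:ℝ) - 1)) • γ 1 + (2*(t:ℝ) - 1) • z := by
    funext t
    rw [concatSeg]
    by_cases h : (t:ℝ) ≤ 1/2
    · rw [dif_pos h, if_pos h]
      exact path_congr γ
        (by rw [coe_projIcc01 (by linarith [t.2.1]) (by linarith)])
    · rw [dif_neg h, if_neg h]
  rw [key]
  apply Continuous.if_le
  · exact hγ.comp (continuous_projIcc.comp (by fun_prop))
  · apply Continuous.add
    · exact (Continuous.sub continuous_const (by fun_prop : Continuous fun t : unitInterval => 2*(t:ℝ) - 1)).smul continuous_const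
    · exact (Continuous.sub (by fun_prop : Continuous fun t : unitInterval => 2*(t:ℝ)) continuous_const).smul continuous_const
  · exact continuous_subtype_val
  · exact continuous_const
  · intro t ht
    rw [ht]
    have harg : γ (Set.projIcc (0:ℝ) 1 zero_le_one (2 * (1/2:ℝ))) = γ 1 :=
      path_congr γ (by rw [coe_projIcc01 (by norm_num) (by norm_num), unit_coe_one]; norm_num)
    rw [harg]
    norm_num

lemma concatSeg_cases {n : ℕ} (γ : PathC n) (z : Fin n → ℂ) (t : unitInterval) :
    (∃ s, concatSeg γ z t = γ s) ∨
      (∃ r : ℝ, 0 ≤ r ∧ r ≤ 1 ∧ concatSeg γ z t = (1 - r) • γ 1 + r • z) := by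
  rw [concatSeg]
  by_cases h : (t:ℝ) ≤ 1/2
  · rw [dif_pos h]; exact Or.inl ⟨_, rfl⟩
  · rw [dif_neg h]
    push_neg at h
    exact Or.inr ⟨2*(t:ℝ) - 1, by linarith, by linarith [t.2.2], rfl⟩

lemma pathInSlice_concatSeg {n : ℕ} {Ω : Set (Fin n → ℍ[ℝ])} {J : ℍ[ℝ]} {γ : PathC n}
    {z : Fin n → ℂ} (h1 : pathInSlice Ω J γ)
    (h2 : ∀ r : ℝ, 0 ≤ r → r ≤ 1 → psi J ((1 - r) • γ 1 + r • z) ∈ Ω) :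
    pathInSlice Ω J (concatSeg γ z) := by
  intro t
  rcases concatSeg_cases γ z t with ⟨s, hs⟩ | ⟨r, hr0, hr1, hr⟩
  · rw [hs]; exact h1 s
  · rw [hr]; exact h2 r hr0 hr1

lemma pathInSlice_of_concatSeg {n : ℕ} {Ω : Set (Fin n → ℍ[ℝ])} {J : ℍ[ℝ]} {γ : PathC n}
    {z : Fin n → ℂ} (h : pathInSlice Ω J (concatSeg γ z)) : pathInSlice Ω J γ := by
  intro t
  have ht2 : ((t:ℝ)/2) ∈ Set.Icc (0:ℝ) 1 := ⟨by linarith [t.2.1], by linarith [t.2.2]⟩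
  have h' := h ⟨(t:ℝ)/2, ht2⟩
  rw [concatSeg] at h'
  rw [dif_pos (show ((⟨(t:ℝ)/2, ht2⟩ : unitInterval):ℝ) ≤ 1/2 by
    simp only; linarith [t.2.2])] at h'
  have harg : γ (⟨2 * ((⟨(t:ℝ)/2, ht2⟩ : unitInterval):ℝ),
      ⟨by simp only; linarith [t.2.1], by simp only; linarith [t.2.2]⟩⟩ : unitInterval)
      = γ t := path_congr γ (by show 2 * ((t:ℝ)/2) = (t:ℝ); ring)
  rwa [harg] at h'

/-! ### joinRev -/

def joinRev {n : ℕ} (α β : PathC n) : PathC n := fun t =>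
  if (t:ℝ) ≤ 1/2 then α (Set.projIcc 0 1 zero_le_one (2*(t:ℝ)))
  else β (Set.projIcc 0 1 zero_le_one (2 - 2*(t:ℝ)))

lemma joinRev_apply_le {n : ℕ} (α β : PathC n) {t : unitInterval} (h : (t:ℝ) ≤ 1/2) :
    joinRev α β t = α (Set.projIcc 0 1 zero_le_one (2*(t:ℝ))) := if_pos h

lemma joinRev_apply_gt {n : ℕ} (α β : PathC n) {t : unitInterval} (h : ¬ (t:ℝ) ≤ 1/2) :
    joinRev α β t = β (Set.projIcc 0 1 zero_le_one (2 - 2*(t:ℝ))) := if_neg h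

lemma joinRev_zero {n : ℕ} (α β : PathC n) : joinRev α β 0 = α 0 := by
  rw [joinRev_apply_le α β (by rw [unit_coe_zero]; norm_num)]
  exact path_congr α
    (by rw [coe_projIcc01 (by rw [unit_coe_zero]; norm_num) (by rw [unit_coe_zero]; norm_num),
      unit_coe_zero]; norm_num)

lemma joinRev_continuous {n : ℕ} {α β : PathC n} (hα : Continuous α) (hβ : Continuous β)
    (hend : α 1 = β 1) : Continuous (joinRev α β) := by
  apply Continuous.if_le
  · exact hα.comp (continuous_projIcc.comp (by fun_prop))
  · exact hβ.comp (continuous_projIcc.comp (by fun_prop))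
  · exact continuous_subtype_val
  · exact continuous_const
  · intro t ht
    rw [ht]
    have e1 : α (Set.projIcc (0:ℝ) 1 zero_le_one (2 * (1/2:ℝ))) = α 1 :=
      path_congr α (by rw [coe_projIcc01 (by norm_num) (by norm_num), unit_coe_one]; norm_num)
    have e2 : β (Set.projIcc (0:ℝ) 1 zero_le_one (2 - 2 * (1/2:ℝ))) = β 1 :=
      path_congr β (by rw [coe_projIcc01 (by norm_num) (by norm_num), unit_coe_one]; norm_num)
    rw [e1, e2, hend]

lemma joinRev_cases {n : ℕ} (α β : PathC n) (t : unitInterval) :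
    (∃ s, joinRev α β t = α s) ∨ (∃ s, joinRev α β t = β s) := by
  by_cases h : (t:ℝ) ≤ 1/2
  · rw [joinRev_apply_le α β h]; exact Or.inl ⟨_, rfl⟩
  · rw [joinRev_apply_gt α β h]; exact Or.inr ⟨_, rfl⟩

lemma sgamma_joinRev_subset {n : ℕ} {Ω : Set (Fin n → ℍ[ℝ])} {α β : PathC n}
    (hend : α 1 = β 1) : SGamma Ω (joinRev α β) ⊆ SGamma Ω α ∩ SGamma Ω β := by
  rintro J ⟨hJQ, hsl⟩
  have hα : pathInSlice Ω J α := by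
    intro t
    have ht2 : ((t:ℝ)/2) ∈ Set.Icc (0:ℝ) 1 := ⟨by linarith [t.2.1], by linarith [t.2.2]⟩
    have h' := hsl ⟨(t:ℝ)/2, ht2⟩
    rw [joinRev_apply_le α β (by simp only; linarith [t.2.2])] at h'
    have harg : α (Set.projIcc (0:ℝ) 1 zero_le_one
        (2 * ((⟨(t:ℝ)/2, ht2⟩ : unitInterval):ℝ))) = α t := by
      apply path_congr α
      rw [show (2 * ((⟨(t:ℝ)/2, ht2⟩ : unitInterval):ℝ)) = (t:ℝ) by simp only; ring]
      rw [coe_projIcc01 t.2.1 t.2.2]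
    rwa [harg] at h'
  have hβ : pathInSlice Ω J β := by
    intro t
    have ht2 : (1 - (t:ℝ)/2) ∈ Set.Icc (0:ℝ) 1 := ⟨by linarith [t.2.2], by linarith [t.2.1]⟩
    have h' := hsl ⟨1 - (t:ℝ)/2, ht2⟩
    by_cases hc : ((⟨1 - (t:ℝ)/2, ht2⟩ : unitInterval):ℝ) ≤ 1/2
    · have ht1 : (t:ℝ) = 1 := by simp only at hc; linarith [t.2.2]
      have htt : t = 1 := Subtype.ext ht1
      rw [joinRev_apply_le α β hc] at h'
      have harg : α (Set.projIcc (0:ℝ) 1 zero_le_one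
          (2 * ((⟨1 - (t:ℝ)/2, ht2⟩ : unitInterval):ℝ))) = α 1 := by
        apply path_congr α
        rw [show (2 * ((⟨1 - (t:ℝ)/2, ht2⟩ : unitInterval):ℝ)) = 1 by simp only; rw [ht1]; ring]
        rw [coe_projIcc01 (by norm_num) (by norm_num), unit_coe_one]
      rw [harg, hend] at h'
      rw [htt]
      exact h'
    · rw [joinRev_apply_gt α β hc] at h'
      have harg : β (Set.projIcc (0:ℝ) 1 zero_le_one
          (2 - 2 * ((⟨1 - (t:ℝ)/2, ht2⟩ : unitInterval):ℝ))) = β t := by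
        apply path_congr β
        rw [show (2 - 2 * ((⟨1 - (t:ℝ)/2, ht2⟩ : unitInterval):ℝ)) = (t:ℝ) by simp only; ring]
        rw [coe_projIcc01 t.2.1 t.2.2]
      rwa [harg] at h'
  exact ⟨⟨hJQ, hα⟩, ⟨hJQ, hβ⟩⟩

/-! ### conjugate path -/

lemma pathInSlice_conj {n : ℕ} {Ω : Set (Fin n → ℍ[ℝ])} {J : ℍ[ℝ]} {γ : PathC n}
    (h : pathInSlice Ω J γ) : pathInSlice Ω (-J) (fun t => conjC (γ t)) := by
  intro t
  rw [psi_neg_conj]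
  exact h t

lemma isPathP_conj {n : ℕ} {γ : PathC n} (h : IsPathP γ) :
    IsPathP (fun t => conjC (γ t)) := by
  refine ⟨continuous_conjC.comp h.1, ?_⟩
  intro k
  simp [conjC, h.2 k]

/-! ### algebra of stems -/

lemma stem_pair_unique {J K : ℍ[ℝ]} (hne : J ≠ K) {F₁ F₂ G₁ G₂ A B : ℍ[ℝ]}
    (h1 : F₁ + J * F₂ = A) (h2 : F₁ + K * F₂ = B)
    (h3 : G₁ + J * G₂ = A) (h4 : G₁ + K * G₂ = B) : F₁ = G₁ ∧ F₂ = G₂ := by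
  have hd : (J - K) * (F₂ - G₂) = 0 := by
    rw [sub_mul, mul_sub, mul_sub]
    linear_combination (norm := abel) h1 - h3 - (h2 - h4)
  rcases mul_eq_zero.1 hd with h5 | h5
  · exact absurd (sub_eq_zero.1 h5) hne
  · have h6 : F₂ = G₂ := sub_eq_zero.1 h5
    refine ⟨?_, h6⟩
    have := h1.trans h3.symm
    rw [h6] at this
    exact add_right_cancel this

lemma stem_solve {J K : ℍ[ℝ]} (hne : J ≠ K) {F₁ F₂ A B : ℍ[ℝ]}
    (h1 : F₁ + J * F₂ = A) (h2 : F₁ + K * F₂ = B) :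
    F₂ = (J - K)⁻¹ * (A - B) ∧ F₁ = A - J * ((J - K)⁻¹ * (A - B)) := by
  have hd0 : J - K ≠ 0 := sub_ne_zero_of_ne hne
  have hdF : (J - K) * F₂ = A - B := by
    rw [sub_mul]
    linear_combination (norm := abel) h1 - h2
  have hF2 : F₂ = (J - K)⁻¹ * (A - B) := by
    rw [← hdF, ← mul_assoc, inv_mul_cancel₀ hd0, one_mul]
  refine ⟨hF2, ?_⟩
  rw [← hF2]
  linear_combination (norm := abel) h1

/-! ### independence of the stem value on the path -/

lemma F_indep {n : ℕ} {Ω₁ Ω₂ : Set (Fin n → ℍ[ℝ])}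
    (hsp1 : ∀ γ : PathC n, PathIn Ω₁ γ → (SGamma Ω₂ γ).Nontrivial)
    {f : (Fin n → ℍ[ℝ]) → ℍ[ℝ]} {F : PathC n → ℍ[ℝ] × ℍ[ℝ]} (hstem : IsStem Ω₂ f F)
    {α β : PathC n} (hα : IsPathP α) (hβ : IsPathP β)
    {J : ℍ[ℝ]} (hJQ : J ∈ SQ) (hαs : pathInSlice Ω₁ J α) (hβs : pathInSlice Ω₁ J β)
    (hend : α 1 = β 1) : F α = F β := by
  have hδc : Continuous (joinRev α β) := joinRev_continuous hα.1 hβ.1 hend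
  have hδ0 : ∀ k, ((joinRev α β 0) k).im = 0 := by
    intro k
    rw [joinRev_zero]
    exact hα.2 k
  have hδslice : pathInSlice Ω₁ J (joinRev α β) := by
    intro t
    rcases joinRev_cases α β t with ⟨s, hs⟩ | ⟨s, hs⟩
    · rw [hs]; exact hαs s
    · rw [hs]; exact hβs s
  have hδin : PathIn Ω₁ (joinRev α β) := ⟨⟨hδc, hδ0⟩, J, hJQ, hδslice⟩
  obtain ⟨J₁, hJ₁, J₂, hJ₂, hJne⟩ := hsp1 (joinRev α β) hδin
  have hsub := sgamma_joinRev_subset (Ω := Ω₂) hend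
  have hJ₁α : J₁ ∈ SGamma Ω₂ α := (hsub hJ₁).1
  have hJ₁β : J₁ ∈ SGamma Ω₂ β := (hsub hJ₁).2
  have hJ₂α : J₂ ∈ SGamma Ω₂ α := (hsub hJ₂).1
  have hJ₂β : J₂ ∈ SGamma Ω₂ β := (hsub hJ₂).2
  have hαin : PathIn Ω₂ α := ⟨hα, J₁, hJ₁α⟩
  have hβin : PathIn Ω₂ β := ⟨hβ, J₁, hJ₁β⟩
  have e1 := hstem α hαin J₁ hJ₁α
  have e2 := hstem α hαin J₂ hJ₂α
  have e3 := hstem β hβin J₁ hJ₁β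
  have e4 := hstem β hβin J₂ hJ₂β
  rw [hend] at e1 e2
  have := stem_pair_unique hJne e1.symm e2.symm e3.symm e4.symm
  exact Prod.ext this.1 this.2

/-! ### conjugation symmetry of the stem -/

lemma F_conj {n : ℕ} {Ω₂ : Set (Fin n → ℍ[ℝ])}
    {f : (Fin n → ℍ[ℝ]) → ℍ[ℝ]} {F : PathC n → ℍ[ℝ] × ℍ[ℝ]} (hstem : IsStem Ω₂ f F)
    {α : PathC n} (hα : IsPathP α) {J₁ J₂ : ℍ[ℝ]}
    (h1 : J₁ ∈ SGamma Ω₂ α) (h2 : J₂ ∈ SGamma Ω₂ α) (hne : J₁ ≠ J₂) :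
    (F (fun t => conjC (α t))).1 = (F α).1 ∧ (F (fun t => conjC (α t))).2 = -(F α).2 := by
  set ᾱ : PathC n := fun t => conjC (α t) with hᾱ
  have hᾱP : IsPathP ᾱ := isPathP_conj hα
  have hn1 : -J₁ ∈ SGamma Ω₂ ᾱ := ⟨neg_mem_SQ h1.1, pathInSlice_conj h1.2⟩
  have hn2 : -J₂ ∈ SGamma Ω₂ ᾱ := ⟨neg_mem_SQ h2.1, pathInSlice_conj h2.2⟩
  have hᾱin : PathIn Ω₂ ᾱ := ⟨hᾱP, -J₁, hn1⟩
  have hαin : PathIn Ω₂ α := ⟨hα, J₁, h1⟩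
  have e1 := hstem ᾱ hᾱin (-J₁) hn1
  have e2 := hstem ᾱ hᾱin (-J₂) hn2
  have e3 := hstem α hαin J₁ h1
  have e4 := hstem α hαin J₂ h2
  have hα1 : ᾱ 1 = conjC (α 1) := rfl
  rw [hα1, psi_neg_conj] at e1 e2
  have e1' : (F ᾱ).1 + J₁ * (-(F ᾱ).2) = f (psi J₁ (α 1)) := by
    rw [mul_neg, ← neg_mul]; exact e1.symm
  have e2' : (F ᾱ).1 + J₂ * (-(F ᾱ).2) = f (psi J₂ (α 1)) := by
    rw [mul_neg, ← neg_mul]; exact e2.symm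
  have hne' : J₁ ≠ J₂ := hne
  have := stem_pair_unique hne' e1' e2' e3.symm e4.symm
  exact ⟨this.1, by rw [← this.2, neg_neg]⟩




/-- star as a continuous linear map on the quaternions -/
def starQL : ℍ[ℝ] →L[ℝ] ℍ[ℝ] :=
  { toLinearMap :=
    { toFun := star,
      map_add' := star_add,
      map_smul' := fun r a => by simp [Quaternion.star_smul] },
    cont := continuous_star }

lemma starQL_apply (x : ℍ[ℝ]) : starQL x = star x := rfl


end SliceAux

open SliceAux

/-- the `Ω₁`-slice conjugation of a weakly slice regular function is
weakly slice regular. -/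
theorem sliceConj_sliceRegular {n : ℕ} (Ω₁ Ω₂ : Set (Fin n → ℍ[ℝ]))
    (h1 : Ω₁ ⊆ HSliceCone n) (h2 : Ω₂ ⊆ HSliceCone n)
    (ho1 : SliceOpen Ω₁) (ho2 : SliceOpen Ω₂)
    (hrpc : RealPathConnected Ω₁) (hsp : StemPreserving Ω₁ Ω₂)
    (f : (Fin n → ℍ[ℝ]) → ℍ[ℝ]) (hf : SliceRegular Ω₂ f) :
    SliceRegular Ω₁ (sliceConj Ω₁ Ω₂ f) := by
  intro I hI z₀ hz₀
  -- the stem of f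
  have hstem : IsStem Ω₂ f (stemOf Ω₂ f) := by
    rw [stemOf]
    exact Classical.epsilon_spec (exists_stem ho2 hf)
  set F := stemOf Ω₂ f with hF
  -- a base path in slice I ending at z₀
  have hbase : ∃ η : PathC n, IsPathP η ∧ pathInSlice Ω₁ I η ∧ η 1 = z₀ := by
    by_cases hzr : ∀ k, (z₀ k).im = 0
    · exact ⟨fun _ => z₀, ⟨continuous_const, fun k => hzr k⟩, fun t => hz₀, rfl⟩
    · obtain ⟨γ, hγin, I'', hI''mem, hend⟩ := hrpc (psi I z₀) hz₀
      rcases psi_eq_cases hI hI''mem.1 hend hzr with ⟨hII, hzz⟩ | ⟨hII, hzz⟩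
      · refine ⟨γ, hγin.1, ?_, hzz⟩
        rw [← hII]; exact hI''mem.2
      · refine ⟨fun t => conjC (γ t), isPathP_conj hγin.1, ?_, ?_⟩
        · have := pathInSlice_conj hI''mem.2
          rwa [hII, neg_neg] at this
        · show conjC (γ 1) = z₀
          rw [hzz, conjC_conjC]
  obtain ⟨η, hηP, hηs, hη1⟩ := hbase
  -- the two auxiliary units
  have hδ₀P : IsPathP (concatSeg η z₀) :=
    ⟨concatSeg_continuous hηP.1 z₀, by rw [concatSeg_zero]; exact hηP.2⟩
  have hsegz : ∀ r : ℝ, (1 - r) • η 1 + r • z₀ = z₀ := by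
    intro r
    rw [hη1, ← add_smul, sub_add_cancel, one_smul]
  have hδ₀s : pathInSlice Ω₁ I (concatSeg η z₀) :=
    pathInSlice_concatSeg hηs (fun r _ _ => by rw [hsegz r]; exact hz₀)
  have hδ₀in : PathIn Ω₁ (concatSeg η z₀) := ⟨hδ₀P, I, hI, hδ₀s⟩
  obtain ⟨J, hJδ, K, hKδ, hJK⟩ := hsp.1 (concatSeg η z₀) hδ₀in
  have hJQ : J ∈ SQ := hJδ.1
  have hKQ : K ∈ SQ := hKδ.1
  have hηJ : pathInSlice Ω₂ J η := pathInSlice_of_concatSeg hJδ.2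
  have hηK : pathInSlice Ω₂ K η := pathInSlice_of_concatSeg hKδ.2
  have hz₀J : psi J z₀ ∈ Ω₂ := by
    have := hJδ.2 1; rwa [concatSeg_one] at this
  have hz₀K : psi K z₀ ∈ Ω₂ := by
    have := hKδ.2 1; rwa [concatSeg_one] at this
  -- a radius
  obtain ⟨r₁, hr₁, hball₁⟩ := Metric.isOpen_iff.1 (ho1 I hI) z₀ hz₀
  obtain ⟨r₂, hr₂, hball₂⟩ := Metric.isOpen_iff.1 (ho2 J hJQ) z₀ hz₀J
  obtain ⟨r₃, hr₃, hball₃⟩ := Metric.isOpen_iff.1 (ho2 K hKQ) z₀ hz₀K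
  set r := min r₁ (min r₂ r₃) with hrdef
  have hr : 0 < r := by positivity
  have hb₁ : Metric.ball z₀ r ⊆ {w | psi I w ∈ Ω₁} :=
    (Metric.ball_subset_ball (by rw [hrdef]; exact min_le_left _ _)).trans hball₁
  have hb₂ : Metric.ball z₀ r ⊆ {w | psi J w ∈ Ω₂} := by
    refine (Metric.ball_subset_ball ?_).trans hball₂
    rw [hrdef]
    exact le_trans (min_le_right _ _) (min_le_left _ _)
  have hb₃ : Metric.ball z₀ r ⊆ {w | psi K w ∈ Ω₂} := by
    refine (Metric.ball_subset_ball ?_).trans hball₃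
    rw [hrdef]
    exact le_trans (min_le_right _ _) (min_le_right _ _)
  -- segment points stay in the ball
  have hsegball : ∀ w ∈ Metric.ball z₀ r, ∀ s : ℝ, 0 ≤ s → s ≤ 1 →
      ((1 - s) • η 1 + s • w) ∈ Metric.ball z₀ r := by
    intro w hw s h0 h1
    rw [hη1, Metric.mem_ball, dist_eq_norm]
    have heq : (1 - s) • z₀ + s • w - z₀ = s • (w - z₀) := by module
    rw [heq, norm_smul, Real.norm_eq_abs, abs_of_nonneg h0]
    rw [Metric.mem_ball, dist_eq_norm] at hw
    calc s * ‖w - z₀‖ ≤ 1 * ‖w - z₀‖ := mul_le_mul_of_nonneg_right h1 (norm_nonneg _)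
      _ = ‖w - z₀‖ := one_mul _
      _ < r := hw
  -- path facts for each w in the ball
  have hconP : ∀ w : Fin n → ℂ, IsPathP (concatSeg η w) := fun w =>
    ⟨concatSeg_continuous hηP.1 w, by rw [concatSeg_zero]; exact hηP.2⟩
  have hconI : ∀ w ∈ Metric.ball z₀ r, pathInSlice Ω₁ I (concatSeg η w) := fun w hw =>
    pathInSlice_concatSeg hηs (fun s h0 h1 => hb₁ (hsegball w hw s h0 h1))
  have hconJ : ∀ w ∈ Metric.ball z₀ r, pathInSlice Ω₂ J (concatSeg η w) := fun w hw =>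
    pathInSlice_concatSeg hηJ (fun s h0 h1 => hb₂ (hsegball w hw s h0 h1))
  have hconK : ∀ w ∈ Metric.ball z₀ r, pathInSlice Ω₂ K (concatSeg η w) := fun w hw =>
    pathInSlice_concatSeg hηK (fun s h0 h1 => hb₃ (hsegball w hw s h0 h1))
  -- the stem along concatenated paths
  have hkey : ∀ w ∈ Metric.ball z₀ r,
      (F (concatSeg η w)).1
        = f (psi J w) - J * ((J - K)⁻¹ * (f (psi J w) - f (psi K w)))
      ∧ (F (concatSeg η w)).2 = (J - K)⁻¹ * (f (psi J w) - f (psi K w)) := by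
    intro w hw
    have hin2 : PathIn Ω₂ (concatSeg η w) := ⟨hconP w, J, hJQ, hconJ w hw⟩
    have e1 := hstem _ hin2 J ⟨hJQ, hconJ w hw⟩
    have e2 := hstem _ hin2 K ⟨hKQ, hconK w hw⟩
    rw [concatSeg_one] at e1 e2
    have := stem_solve hJK e1.symm e2.symm
    exact ⟨this.2, this.1⟩
  -- the local model function
  set Λ : (Fin n → ℂ) → ℍ[ℝ] := fun w =>
    starQL (f (psi J w) - J * ((J - K)⁻¹ * (f (psi J w) - f (psi K w))))
      + I * starQL ((J - K)⁻¹ * (f (psi J w) - f (psi K w))) with hΛ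
  -- pointwise identification on the ball
  have heqon : ∀ w ∈ Metric.ball z₀ r, sliceConj Ω₁ Ω₂ f (psi I w) = Λ w := by
    intro w hw
    have hFc := hkey w hw
    show star (scrF Ω₁ Ω₂ f (psi I w)).1
        + frakI (psi I w) * star (scrF Ω₁ Ω₂ f (psi I w)).2 = Λ w
    by_cases hwr : ∀ k, (w k).im = 0
    · -- real point
      have hqreal : ∀ k, IsRealQ (psi I w k) := fun k => (isRealQ_psi_iff hI).2 (hwr k)
      rw [scrF, if_pos hqreal, frakI_eq_zero hqreal]
      simp only [star_zero, mul_zero, zero_mul, add_zero, sub_zero]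
      rw [hΛ]
      simp only [starQL_apply]
      rw [show psi K w = psi J w from psi_real hwr]
      simp only [sub_self, mul_zero, star_zero, mul_zero, add_zero, sub_zero]
      rw [show psi J w = psi I w from psi_real hwr]
    · -- nonreal point
      have hqnr : ¬ ∀ k, IsRealQ (psi I w k) := fun h =>
        hwr (fun k => (isRealQ_psi_iff hI).1 (h k))
      rw [scrF, if_neg hqnr]
      set P : PathC n → Prop := fun γ =>
        PathIn Ω₁ γ ∧ pathInSlice Ω₁ (frakI (psi I w)) γ
          ∧ psi (frakI (psi I w)) (γ 1) = psi I w with hP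
      have hconin1 : PathIn Ω₁ (concatSeg η w) := ⟨hconP w, I, hI, hconI w hw⟩
      rcases frakI_cases hI hwr with hfr | hfr
      · -- frakI = I
        have hPsat : P (concatSeg η w) := by
          refine ⟨hconin1, ?_, ?_⟩
          · rw [hfr]; exact hconI w hw
          · rw [hfr, concatSeg_one]
        have hPs : P (Classical.epsilon P) := Classical.epsilon_spec ⟨_, hPsat⟩
        obtain ⟨hεin, hεslice, hεend⟩ := hPs
        rw [hfr] at hεslice hεend
        have hεend' : Classical.epsilon P 1 = w := psi_inj hI hεend
        have hFeq : F (Classical.epsilon P) = F (concatSeg η w) :=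
          F_indep hsp.1 hstem hεin.1 (hconP w) hI hεslice (hconI w hw)
            (by rw [hεend', concatSeg_one])
        show star (F (Classical.epsilon P)).1
            + frakI (psi I w) * star (F (Classical.epsilon P)).2 = Λ w
        rw [hfr, hFeq, hFc.1, hFc.2, hΛ]
        rfl
      · -- frakI = -I
        have hPsat : P (fun t => conjC (concatSeg η w t)) := by
          refine ⟨⟨isPathP_conj (hconP w), -I, neg_mem_SQ hI,
            pathInSlice_conj (hconI w hw)⟩, ?_, ?_⟩
          · rw [hfr]; exact pathInSlice_conj (hconI w hw)
          · rw [hfr]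
            show psi (-I) (conjC (concatSeg η w 1)) = psi I w
            rw [psi_neg_conj, concatSeg_one]
        have hPs : P (Classical.epsilon P) := Classical.epsilon_spec ⟨_, hPsat⟩
        obtain ⟨hεin, hεslice, hεend⟩ := hPs
        rw [hfr] at hεslice hεend
        have hεend' : Classical.epsilon P 1 = conjC w := by
          apply psi_inj (neg_mem_SQ hI)
          rw [hεend, psi_neg_conj]
        have hFeq : F (Classical.epsilon P) = F (fun t => conjC (concatSeg η w t)) :=
          F_indep hsp.1 hstem hεin.1 (isPathP_conj (hconP w)) (neg_mem_SQ hI) hεslice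
            (pathInSlice_conj (hconI w hw))
            (by rw [hεend']; show conjC w = conjC (concatSeg η w 1); rw [concatSeg_one])
        have hFconj := F_conj hstem (hconP w) ⟨hJQ, hconJ w hw⟩ ⟨hKQ, hconK w hw⟩ hJK
        show star (F (Classical.epsilon P)).1
            + frakI (psi I w) * star (F (Classical.epsilon P)).2 = Λ w
        rw [hfr, hFeq, hFconj.1, hFconj.2, hFc.1, hFc.2, hΛ]
        simp only [starQL_apply, star_neg, mul_neg, neg_mul, neg_neg]
  -- differentiability data at z₀
  obtain ⟨hdJ, hcrJ⟩ := slice_diff ho2 hf hJQ hz₀J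
  obtain ⟨hdK, hcrK⟩ := slice_diff ho2 hf hKQ hz₀K
  set DJ := fderiv ℝ (fun w => f (psi J w)) z₀ with hDJ
  set DK := fderiv ℝ (fun w => f (psi K w)) z₀ with hDK
  have hF1d : HasFDerivAt
      (fun w => f (psi J w) - J * ((J - K)⁻¹ * (f (psi J w) - f (psi K w))))
      (DJ - J • ((J - K)⁻¹ • (DJ - DK))) z₀ :=
    hdJ.hasFDerivAt.sub
      (((hdJ.hasFDerivAt.sub hdK.hasFDerivAt).const_mul ((J - K)⁻¹)).const_mul J)
  have hF2d : HasFDerivAt (fun w => (J - K)⁻¹ * (f (psi J w) - f (psi K w)))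
      ((J - K)⁻¹ • (DJ - DK)) z₀ :=
    (hdJ.hasFDerivAt.sub hdK.hasFDerivAt).const_mul ((J - K)⁻¹)
  have hΛd : HasFDerivAt Λ
      ((starQL.comp (DJ - J • ((J - K)⁻¹ • (DJ - DK))))
        + I • (starQL.comp ((J - K)⁻¹ • (DJ - DK)))) z₀ :=
    (starQL.hasFDerivAt.comp z₀ hF1d).add
      ((starQL.hasFDerivAt.comp z₀ hF2d).const_mul I)
  have hev : (fun w => sliceConj Ω₁ Ω₂ f (psi I w)) =ᶠ[𝓝 z₀] Λ :=
    Filter.eventuallyEq_of_mem (Metric.ball_mem_nhds z₀ hr) heqon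
  constructor
  · exact ((hev.differentiableAt_iff).2 hΛd.differentiableAt).differentiableWithinAt
  · intro ℓ
    rw [fderivWithin_of_isOpen (ho1 I hI) hz₀]
    rw [hev.fderiv_eq, hΛd.fderiv]
    simp only [ContinuousLinearMap.add_apply, ContinuousLinearMap.coe_comp',
      Function.comp_apply, ContinuousLinearMap.smul_apply, ContinuousLinearMap.sub_apply,
      ContinuousLinearMap.coe_smul', Pi.smul_apply, smul_eq_mul, starQL_apply, mul_add]
    set a := DJ (Pi.single ℓ 1) with ha
    set a' := DJ (Pi.single ℓ Complex.I) with ha'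
    set b := DK (Pi.single ℓ 1) with hb
    set b' := DK (Pi.single ℓ Complex.I) with hb'
    have hJcr : a + J * a' = 0 := hcrJ ℓ
    have hKcr : b + K * b' = 0 := hcrK ℓ
    have hX := sigma_cr1 hJQ hKQ hJK hJcr hKcr
    have hY : a' - J * ((J - K)⁻¹ * (a' - b')) = -((J - K)⁻¹ * (a - b)) :=
      eq_neg_of_add_eq_zero_right (sigma_cr2 hJQ hKQ hJK hJcr hKcr)
    rw [hX, hY, star_neg, mul_neg]
    rw [show I * (I * star ((J - K)⁻¹ * (a' - b'))) = -star ((J - K)⁻¹ * (a' - b')) from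
      eJJ hI _]
    abel


end
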